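/- Let 𝒟 be a definable subcategory of Mod-R, M ∈ 𝒟 strictly 𝒟-atomic and finitely generated over its endomorphism ring S = End(M_R). Then the ring of definable scalars of M equals the biendomorphism ring Biend(M_R) = End_S(M). -/

import Mathlib

open TensorProduct DirectSum

universe u v

/-- A pp formula in `n` free variables. -/
structure PPFormula (R : Type u) [Ring R] (n : ℕ) where
  k : ℕ
  m : ℕ
  A : Fin n → Fin m → R
  B : Fin k → Fin m → R

/-- The solution set of a pp formula in a module. -/
def PPFormula.sol {R : Type u} [Ring R] {n : ℕ} (φ : PPFormula R n)
    (M : Type v) [AddCommGroup M] [Module R M] : Set (Fin n → M) :=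
  { a | ∃ b : Fin φ.k → M, ∀ j,
      (∑ i, φ.A i j • a i) + (∑ l, φ.B l j • b l) = 0 }

/-- A submodule `N ≤ M` is pure if `N ⊗ L → M ⊗ L` is injective for every module `L`. -/
def IsPureSubmodule (R : Type u) [CommRing R]
    (M : Type v) [AddCommGroup M] [Module R M] (N : Submodule R M) : Prop :=
  ∀ (L : Type v) [AddCommGroup L] [Module R L],
    Function.Injective (LinearMap.rTensor L N.subtype)

/-- A surjection is a pure epimorphism if its kernel is a pure submodule of the domain. -/
def IsPureEpi (R : Type u) [CommRing R]
    {N : Type v} [AddCommGroup N] [Module R N] {M : Type v} [AddCommGroup M] [Module R M]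
    (f : N →ₗ[R] M) : Prop :=
  Function.Surjective f ∧ IsPureSubmodule R N (LinearMap.ker f)

/-- A class of modules (closed under isomorphism) is definable if it is closed under
direct products, direct limits and pure submodules. -/
def IsDefinableClass (R : Type u) [CommRing R]
    (D : (M : Type v) → [AddCommGroup M] → [Module R M] → Prop) : Prop :=
  (∀ (M N : Type v) [AddCommGroup M] [Module R M] [AddCommGroup N] [Module R N],
      (M ≃ₗ[R] N) → D M → D N) ∧
  (∀ (ι : Type v) (L : ι → Type v) [∀ i, AddCommGroup (L i)] [∀ i, Module R (L i)],
      (∀ i, D (L i)) → D (∀ i, L i)) ∧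
  (∀ (ι : Type v) [Preorder ι] [IsDirected ι (· ≤ ·)] [Nonempty ι] [DecidableEq ι]
      (G : ι → Type v) [∀ i, AddCommGroup (G i)] [∀ i, Module R (G i)]
      (f : ∀ i j, i ≤ j → G i →ₗ[R] G j) [DirectedSystem G (fun i j h => f i j h)],
      (∀ i, D (G i)) → D (Module.DirectLimit G f)) ∧
  (∀ (M : Type v) [AddCommGroup M] [Module R M] (N : Submodule R M),
      IsPureSubmodule R M N → D M → D N)

/-- `φ` generates the pp-type of the tuple `a` of `M` modulo the theory of `𝒟`. -/
def DGenerates (R : Type u) [CommRing R]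
    (D : (M : Type v) → [AddCommGroup M] → [Module R M] → Prop)
    {n : ℕ} (φ : PPFormula R n)
    (M : Type v) [AddCommGroup M] [Module R M] (a : Fin n → M) : Prop :=
  a ∈ φ.sol M ∧ ∀ ψ : PPFormula R n, a ∈ ψ.sol M →
    ∀ (N : Type v) [AddCommGroup N] [Module R N], D N → φ.sol N ⊆ ψ.sol N

/-- `M ∈ 𝒟` is `𝒟`-atomic: every pp-type realised in `M` is `𝒟`-finitely generated. -/
def IsDAtomic (R : Type u) [CommRing R]
    (D : (M : Type v) → [AddCommGroup M] → [Module R M] → Prop)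
    (M : Type v) [AddCommGroup M] [Module R M] : Prop :=
  D M ∧ ∀ (n : ℕ) (a : Fin n → M), ∃ φ : PPFormula R n, DGenerates R D φ M a

/-- `M ∈ 𝒟` is strictly `𝒟`-atomic: it is `𝒟`-atomic and whenever `φ` `𝒟`-generates
the pp-type of `ā` in `M`, every `b̄ ∈ φ(N)` with `N ∈ 𝒟` is the image of `ā` under a
morphism `M → N`. -/
def IsStrictlyDAtomic (R : Type u) [CommRing R]
    (D : (M : Type v) → [AddCommGroup M] → [Module R M] → Prop)
    (M : Type v) [AddCommGroup M] [Module R M] : Prop :=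
  IsDAtomic R D M ∧
    ∀ (n : ℕ) (a : Fin n → M) (φ : PPFormula R n), DGenerates R D φ M a →
      ∀ (N : Type v) [AddCommGroup N] [Module R N], D N →
        ∀ b ∈ φ.sol N, ∃ f : M →ₗ[R] N, ∀ i, f (a i) = b i

/-- `N` belongs to the definable subcategory generated by `M`: every pp-pair closed on
`M` is closed on `N`. -/
def InDefGen (R : Type u) [CommRing R] (M : Type v) [AddCommGroup M] [Module R M]
    (N : Type v) [AddCommGroup N] [Module R N] : Prop :=
  ∀ (n : ℕ) (φ ψ : PPFormula R n), φ.sol M = ψ.sol M → φ.sol N = ψ.sol N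

/-- A pp formula `ρ(x, y)` is a definable scalar for `M` if on every member of the
definable subcategory generated by `M` its solution set is the graph of a function. -/
def IsDefinableScalarFormula (R : Type u) [CommRing R]
    (M : Type v) [AddCommGroup M] [Module R M] (ρ : PPFormula R 2) : Prop :=
  ∀ (N : Type v) [AddCommGroup N] [Module R N], InDefGen R M N →
    ∀ x : N, ∃! y : N, ![x, y] ∈ ρ.sol N


namespace BiendAux

variable {R : Type u} [CommRing R]

section Basic
variable {M : Type v} [AddCommGroup M] [Module R M]
variable {N : Type v} [AddCommGroup N] [Module R N]

lemma map_sol {n : ℕ} (φ : PPFormula R n) (f : M →ₗ[R] N) {a : Fin n → M}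
    (ha : a ∈ φ.sol M) : (fun i => f (a i)) ∈ φ.sol N := by
  obtain ⟨b, hb⟩ := ha
  refine ⟨fun l => f (b l), fun j => ?_⟩
  have := congrArg f (hb j)
  simpa [map_add, map_sum, map_smul] using this

lemma sub_sol {n : ℕ} (φ : PPFormula R n) {a a' : Fin n → M}
    (ha : a ∈ φ.sol M) (ha' : a' ∈ φ.sol M) : (fun i => a i - a' i) ∈ φ.sol M := by
  obtain ⟨b, hb⟩ := ha; obtain ⟨b', hb'⟩ := ha'
  refine ⟨fun l => b l - b' l, fun j => ?_⟩
  have key : (∑ i, φ.A i j • (a i - a' i)) + (∑ l, φ.B l j • (b l - b' l)) =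
      ((∑ i, φ.A i j • a i) + (∑ l, φ.B l j • b l)) -
        ((∑ i, φ.A i j • a' i) + (∑ l, φ.B l j • b' l)) := by
    simp only [smul_sub, Finset.sum_sub_distrib]
    abel
  rw [key, hb j, hb' j, sub_zero]

end Basic

/-- Build a pp formula from data indexed by arbitrary finite types. -/
noncomputable def ofData {n : ℕ} (K J : Type) [Fintype K] [Fintype J]
    (A : Fin n → J → R) (B : K → J → R) : PPFormula R n :=
  ⟨Fintype.card K, Fintype.card J,
    fun i j => A i ((Fintype.equivFin J).symm j),
    fun l j => B ((Fintype.equivFin K).symm l) ((Fintype.equivFin J).symm j)⟩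

lemma sol_ofData {n : ℕ} (K J : Type) [Fintype K] [Fintype J]
    (A : Fin n → J → R) (B : K → J → R)
    {N : Type v} [AddCommGroup N] [Module R N] (a : Fin n → N) :
    a ∈ (ofData K J A B).sol N ↔
      ∃ b : K → N, ∀ j : J, (∑ i, A i j • a i) + (∑ l, B l j • b l) = 0 := by
  set eK := Fintype.equivFin K
  set eJ := Fintype.equivFin J
  constructor
  · rintro ⟨b, hb⟩
    refine ⟨fun l => b (eK l), fun j => ?_⟩
    have := hb (eJ j)
    simp only [ofData, eJ, Equiv.symm_apply_apply] at this
    rw [← this]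
    congr 1
    exact (Fintype.sum_equiv eK.symm _ _ (fun l => by simp [eK])).symm
  · rintro ⟨b, hb⟩
    refine ⟨fun l => b (eK.symm l), fun j => ?_⟩
    have := hb (eJ.symm j)
    rw [← this]
    congr 1
    exact Fintype.sum_equiv eK.symm _ _ (fun l => rfl)

section Transform
variable {N : Type v} [AddCommGroup N] [Module R N]

/-- `∃ y, φ(x, y)`. -/
def projSnd (φ : PPFormula R 2) : PPFormula R 1 :=
  ⟨φ.k + 1, φ.m, fun _ j => φ.A 0 j,
    fun l j => Fin.lastCases (φ.A 1 j) (fun l' => φ.B l' j) l⟩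

lemma sol_projSnd (φ : PPFormula R 2) (a : Fin 1 → N) :
    a ∈ (projSnd φ).sol N ↔ ∃ y : N, ![a 0, y] ∈ φ.sol N := by
  have h0 : ((Fin.last 0).castSucc : Fin 2) = 0 := rfl
  have h1 : (Fin.last 1 : Fin 2) = 1 := rfl
  have h0' : (Fin.last 0 : Fin 1) = 0 := rfl
  constructor
  · rintro ⟨b, hb⟩
    refine ⟨b (Fin.last _), fun l => b l.castSucc, fun j => ?_⟩
    have := hb j
    simp only [projSnd, Fin.sum_univ_castSucc, Fin.sum_univ_zero, zero_add,
      Fin.lastCases_last, Fin.lastCases_castSucc, h0, h1, h0', Fin.castSucc_zero,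
      Matrix.cons_val_zero, Matrix.cons_val_one, Matrix.head_cons] at this ⊢
    rw [← this]; change _ = _ + ∑ l : Fin (φ.k + 1), _
    rw [Fin.sum_univ_castSucc (n := φ.k)]; simp only [Fin.lastCases_last, Fin.lastCases_castSucc]; abel
  · rintro ⟨y, b, hb⟩
    refine ⟨Fin.lastCases y b, fun j => ?_⟩
    have := hb j
    simp only [projSnd, Fin.sum_univ_castSucc, Fin.sum_univ_zero, zero_add,
      Fin.lastCases_last, Fin.lastCases_castSucc, h0, h1, h0', Fin.castSucc_zero,
      Matrix.cons_val_zero, Matrix.cons_val_one, Matrix.head_cons] at this ⊢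
    rw [← this]; change _ + ∑ l : Fin (φ.k + 1), _ = _
    rw [Fin.sum_univ_castSucc (n := φ.k)]; simp only [Fin.lastCases_last, Fin.lastCases_castSucc]; abel

/-- `φ(0, y)`. -/
def substZero (φ : PPFormula R 2) : PPFormula R 1 :=
  ⟨φ.k, φ.m, fun _ j => φ.A 1 j, φ.B⟩

lemma sol_substZero (φ : PPFormula R 2) (a : Fin 1 → N) :
    a ∈ (substZero φ).sol N ↔ ![(0 : N), a 0] ∈ φ.sol N := by
  constructor
  · rintro ⟨b, hb⟩
    refine ⟨b, fun j => ?_⟩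
    have := hb j
    simp [substZero, Fin.sum_univ_two, Fin.sum_univ_one] at this ⊢; exact this
  · rintro ⟨b, hb⟩
    refine ⟨b, fun j => ?_⟩
    have := hb j
    simp [substZero, Fin.sum_univ_two, Fin.sum_univ_one] at this ⊢; exact this

/-- `φ(y) ∧ y = 0`. -/
def andEqZero (φ : PPFormula R 1) : PPFormula R 1 :=
  ⟨φ.k, φ.m + 1, fun i j => Fin.lastCases 1 (φ.A i) j,
    fun l j => Fin.lastCases 0 (φ.B l) j⟩

lemma sol_andEqZero (φ : PPFormula R 1) (a : Fin 1 → N) :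
    a ∈ (andEqZero φ).sol N ↔ a ∈ φ.sol N ∧ a 0 = 0 := by
  constructor
  · rintro ⟨b, hb⟩
    have hlast := hb (Fin.last _)
    simp only [andEqZero, Fin.sum_univ_one, Fin.lastCases_last, one_smul,
      zero_smul, Finset.sum_const_zero, add_zero] at hlast
    exact ⟨⟨b, fun j => by
      have := hb j.castSucc
      simp [andEqZero, Fin.lastCases_castSucc] at this ⊢; exact this⟩, hlast⟩
  · rintro ⟨⟨b, hb⟩, ha⟩
    refine ⟨b, fun j => ?_⟩
    refine Fin.lastCases ?_ (fun j' => ?_) j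
    · simp [andEqZero, Fin.sum_univ_one, ha]
    · have := hb j'
      simp [andEqZero, Fin.lastCases_castSucc] at this ⊢; exact this

/-- the trivially true formula in one variable. -/
def top1 : PPFormula R 1 := ⟨0, 0, fun _ j => Fin.elim0 j, fun l _ => Fin.elim0 l⟩

lemma sol_top1 (a : Fin 1 → N) : a ∈ (top1 (R := R)).sol N :=
  ⟨Fin.elim0, fun j => Fin.elim0 j⟩

end Transform

section Rho
variable {n : ℕ} (θ : PPFormula R (n + n))

/-- index of the `t`-th block component `i` in a `(n+n)`-tuple. -/
def idx (t : Fin 2) (i : Fin n) : Fin (n + n) :=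
  if t = 0 then Fin.castAdd n i else Fin.natAdd n i

def bigA : Fin 2 → ((Fin n × Fin θ.m) ⊕ Fin 2) → R :=
  fun i j => match j with
  | .inl _ => 0
  | .inr t => if i = t then 1 else 0

def bigB : (Fin n × (Fin (n + n) ⊕ Fin θ.k)) → ((Fin n × Fin θ.m) ⊕ Fin 2) → R :=
  fun p j => match j, p.2 with
  | .inl q, .inl s => if p.1 = q.1 then θ.A s q.2 else 0
  | .inl q, .inr l => if p.1 = q.1 then θ.B l q.2 else 0
  | .inr t, .inl s => if s = idx t p.1 then -1 else 0
  | .inr _, .inr _ => 0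

/-- The candidate definable-scalar formula. -/
noncomputable def rho : PPFormula R 2 :=
  ofData (Fin n × (Fin (n + n) ⊕ Fin θ.k)) ((Fin n × Fin θ.m) ⊕ Fin 2)
    (bigA θ) (bigB θ)

variable {N : Type v} [AddCommGroup N] [Module R N]

lemma key_inl (v : Fin 2 → N) (b : (Fin n × (Fin (n + n) ⊕ Fin θ.k)) → N)
    (i' : Fin n) (j₀ : Fin θ.m) :
    (∑ i, bigA θ i (.inl (i', j₀)) • v i) +
      (∑ p, bigB θ p (.inl (i', j₀)) • b p) =
    (∑ s, θ.A s j₀ • b (i', .inl s)) + (∑ l, θ.B l j₀ • b (i', .inr l)) := by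
  have h1 : (∑ i, bigA θ i (.inl (i', j₀)) • v i) = 0 := by
    simp [bigA]
  rw [h1, zero_add, Fintype.sum_prod_type]
  rw [Finset.sum_eq_single i']
  · rw [Fintype.sum_sum_type]
    simp [bigB]
  · intro i _ hi
    rw [Fintype.sum_sum_type]
    simp [bigB, hi]
  · simp

lemma key_inr (v : Fin 2 → N) (b : (Fin n × (Fin (n + n) ⊕ Fin θ.k)) → N)
    (t : Fin 2) :
    (∑ i, bigA θ i (.inr t) • v i) + (∑ p, bigB θ p (.inr t) • b p) =
    v t - ∑ i, b (i, .inl (idx t i)) := by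
  have h1 : (∑ i, bigA θ i (.inr t) • v i) = v t := by
    simp only [bigA]
    rw [Finset.sum_eq_single t] <;> simp_all
  have h2 : (∑ p, bigB θ p (.inr t) • b p) = -∑ i, b (i, .inl (idx t i)) := by
    rw [Fintype.sum_prod_type, ← Finset.sum_neg_distrib]
    refine Finset.sum_congr rfl fun i _ => ?_
    rw [Fintype.sum_sum_type]
    have h3 : (∑ s : Fin (n+n), bigB θ (i, .inl s) (.inr t) • b (i, .inl s)) =
        -b (i, .inl (idx t i)) := by
      simp only [bigB]
      rw [Finset.sum_eq_single (idx t i)] <;> simp_all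
    simp [h3, bigB]
  rw [h1, h2, sub_eq_add_neg]

lemma sol_rho (v : Fin 2 → N) :
    v ∈ (rho θ).sol N ↔
      ∃ t : Fin n → Fin (n + n) → N, (∀ i, t i ∈ θ.sol N) ∧
        v 0 = ∑ i, t i (Fin.castAdd n i) ∧ v 1 = ∑ i, t i (Fin.natAdd n i) := by
  rw [rho, sol_ofData]
  constructor
  · rintro ⟨b, hb⟩
    refine ⟨fun i s => b (i, .inl s), fun i => ⟨fun l => b (i, .inr l), fun j₀ => ?_⟩,
      ?_, ?_⟩
    · have := hb (.inl (i, j₀)); rwa [key_inl] at this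
    · have := hb (.inr 0); rw [key_inr, sub_eq_zero] at this
      simpa [idx] using this
    · have := hb (.inr 1); rw [key_inr, sub_eq_zero] at this
      have h1 : idx (n := n) 1 = Fin.natAdd n := by
        funext i; simp [idx]
      rw [h1] at this; exact this
  · rintro ⟨t, ht, h0, h1⟩
    choose w hw using ht
    refine ⟨fun p => Sum.elim (t p.1) (w p.1) p.2, fun j => ?_⟩
    match j with
    | .inl (i', j₀) => rw [key_inl]; exact hw i' j₀
    | .inr tt =>
      rw [key_inr, sub_eq_zero]
      match tt with
      | 0 => simpa [idx] using h0
      | 1 =>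
        have he : idx (n := n) 1 = Fin.natAdd n := by funext i; simp [idx]
        simpa [he] using h1

end Rho

end BiendAux

/-!
STATEMENT 18: If `M ∈ 𝒟` is strictly `𝒟`-atomic and finitely generated over its
endomorphism ring, then the ring of definable scalars of `M` is the biendomorphism
ring of `M`: an endomorphism `β` commutes with all endomorphisms of `M` iff its graph
is defined by a definable-scalar pp formula.
-/
theorem ring_of_definable_scalars_eq_biend (R : Type u) [CommRing R]
    (D : (M : Type v) → [AddCommGroup M] → [Module R M] → Prop)
    (hD : IsDefinableClass R D)
    (M : Type v) [AddCommGroup M] [Module R M] (hM : D M)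
    (hstr : IsStrictlyDAtomic R D M)
    (hfg : ∃ (n : ℕ) (a : Fin n → M), ∀ m : M,
      ∃ e : Fin n → (M →ₗ[R] M), m = ∑ i, e i (a i))
    (β : M →ₗ[R] M) :
    (∀ s : M →ₗ[R] M, β.comp s = s.comp β) ↔
      ∃ ρ : PPFormula R 2, IsDefinableScalarFormula R M ρ ∧
        ∀ x : M, ![x, β x] ∈ ρ.sol M := by
  classical
  obtain ⟨n, a, ha⟩ := hfg
  constructor
  · -- β commutes with all endomorphisms ⇒ graph of β is pp-definable
    intro hcomm
    have hcomm' : ∀ (s : M →ₗ[R] M) (z : M), β (s z) = s (β z) := fun s z =>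
      LinearMap.congr_fun (hcomm s) z
    set c : Fin (n + n) → M := Fin.append a (fun i => β (a i)) with hc
    obtain ⟨θ, hθ⟩ := hstr.1.2 (n + n) c
    have hcl : ∀ i : Fin n, c (Fin.castAdd n i) = a i := fun i => Fin.append_left _ _ i
    have hcr : ∀ i : Fin n, c (Fin.natAdd n i) = β (a i) := fun i => Fin.append_right _ _ i
    -- graph of β on M
    have hgraph : ∀ x : M, ![x, β x] ∈ (BiendAux.rho θ).sol M := by
      intro x
      obtain ⟨e, he⟩ := ha x
      rw [BiendAux.sol_rho]
      refine ⟨fun i s => e i (c s), fun i => BiendAux.map_sol θ (e i) hθ.1, ?_, ?_⟩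
      · simpa [c, Fin.append_left] using he
      · have : β x = ∑ i, e i (c (Fin.natAdd n i)) := by
          rw [he, map_sum]
          refine Finset.sum_congr rfl fun i _ => ?_
          rw [hcomm' (e i) (a i), hcr i]
        simpa using this
    -- functionality at 0 on M
    have hfunM : ∀ y : M, ![(0 : M), y] ∈ (BiendAux.rho θ).sol M → y = 0 := by
      intro y hy
      rw [BiendAux.sol_rho] at hy
      obtain ⟨t, ht, h0, h1⟩ := hy
      simp only [Matrix.cons_val_zero, Matrix.cons_val_one, Matrix.head_cons] at h0 h1
      choose f hf using fun i => hstr.2 (n + n) c θ hθ M hM (t i) (ht i)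
      have key : ∀ i, t i (Fin.natAdd n i) = β (t i (Fin.castAdd n i)) := by
        intro i
        rw [← hf i (Fin.natAdd n i), ← hf i (Fin.castAdd n i)]
        have hcv : c (Fin.natAdd n i) = β (c (Fin.castAdd n i)) := by
          rw [hcr i, hcl i]
        rw [hcv, hcomm' (f i) (c (Fin.castAdd n i))]
      rw [h1, Finset.sum_congr rfl (fun i _ => key i), ← map_sum, ← h0, map_zero]
    refine ⟨BiendAux.rho θ, ?_, hgraph⟩
    intro N _ _ hN x
    -- totality transfers
    have htot : (BiendAux.projSnd (BiendAux.rho θ)).sol M = (BiendAux.top1 (R := R)).sol M := by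
      apply Set.eq_of_subset_of_subset
      · intro z _; exact BiendAux.sol_top1 z
      · intro z _
        rw [BiendAux.sol_projSnd]
        exact ⟨β (z 0), hgraph (z 0)⟩
    have htotN := hN 1 _ _ htot
    obtain ⟨y, hy⟩ : ∃ y : N, ![x, y] ∈ (BiendAux.rho θ).sol N := by
      have hx : (fun _ : Fin 1 => x) ∈ (BiendAux.projSnd (BiendAux.rho θ)).sol N := by
        rw [htotN]; exact BiendAux.sol_top1 _
      rw [BiendAux.sol_projSnd] at hx
      exact hx
    -- functionality transfers
    have hfun : (BiendAux.substZero (BiendAux.rho θ)).sol M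
        = (BiendAux.andEqZero (BiendAux.substZero (BiendAux.rho θ))).sol M := by
      apply Set.eq_of_subset_of_subset
      · intro z hz
        rw [BiendAux.sol_andEqZero]
        exact ⟨hz, hfunM (z 0) ((BiendAux.sol_substZero _ _).mp hz)⟩
      · intro z hz
        exact ((BiendAux.sol_andEqZero _ _).mp hz).1
    have hfunN := hN 1 _ _ hfun
    have huniq : ∀ y₁ y₂ : N, ![x, y₁] ∈ (BiendAux.rho θ).sol N →
        ![x, y₂] ∈ (BiendAux.rho θ).sol N → y₁ = y₂ := by
      intro y₁ y₂ h₁ h₂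
      have hsub := BiendAux.sub_sol _ h₁ h₂
      have hconv : (fun i => ![x, y₁] i - ![x, y₂] i) = ![(0 : N), y₁ - y₂] := by
        funext i; fin_cases i <;> simp
      rw [hconv] at hsub
      have hz : (fun _ : Fin 1 => y₁ - y₂) ∈ (BiendAux.substZero (BiendAux.rho θ)).sol N := by
        rw [BiendAux.sol_substZero]; exact hsub
      rw [hfunN] at hz
      have := ((BiendAux.sol_andEqZero _ _).mp hz).2
      exact sub_eq_zero.mp this
    exact ⟨y, hy, fun y' hy' => huniq y' y hy' hy⟩
  · -- a definable scalar is a biendomorphism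
    rintro ⟨ρ, hρ, hgr⟩ s
    have hMM : InDefGen R M M := fun n φ ψ h => h
    apply LinearMap.ext
    intro x
    have hux := hρ M hMM (s x)
    have h1 : ![s x, β (s x)] ∈ ρ.sol M := hgr (s x)
    have h2 : ![s x, s (β x)] ∈ ρ.sol M := by
      have hms := BiendAux.map_sol ρ s (hgr x)
      have hconv : (fun i => s (![x, β x] i)) = ![s x, s (β x)] := by
        funext i; fin_cases i <;> simp
      rwa [hconv] at hms
    simp only [LinearMap.comp_apply]
    exact hux.unique h1 h2
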